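/- Let X be a compact metric space, f : X → X a continuous map with the s-limit shadowing property, C a chain component of f, and D ∈ D(C) a class of the chain proximal relation. Then for any x, y ∈ V^s(D) and ε > 0 there is z ∈ V^s(D) with d(y, z) ≤ ε and lim_{i→∞} d(f^i(x), f^i(z)) = 0. -/

import Mathlib

open Filter Topology Metric Set

variable {X : Type*} [MetricSpace X]

/-- There is a `δ`-chain of `f` from `x` to `y`. -/
def ChainReach (f : X → X) (δ : ℝ) (x y : X) : Prop :=
  ∃ k : ℕ, 0 < k ∧ ∃ c : ℕ → X, c 0 = x ∧ c k = y ∧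
    ∀ i < k, dist (f (c i)) (c (i + 1)) ≤ δ

/-- `x → y` : for every `δ > 0` there is a `δ`-chain from `x` to `y`. -/
def ChainTo (f : X → X) (x y : X) : Prop := ∀ δ > 0, ChainReach f δ x y

/-- The chain recurrent set. -/
def CR (f : X → X) : Set X := {x | ChainTo f x x}

/-- The relation `x ↔ y`. -/
def ChainRel (f : X → X) (x y : X) : Prop := ChainTo f x y ∧ ChainTo f y x

/-- A chain component: an equivalence class of `↔` on `CR f`. -/
def IsChainComponent (f : X → X) (C : Set X) : Prop :=
  ∃ x ∈ CR f, C = {y | y ∈ CR f ∧ ChainRel f x y}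

/-- A `δ`-chain of `f` from `x` to `y` of length `k`, all of whose points lie in `S`. -/
def ChainInLen (f : X → X) (S : Set X) (δ : ℝ) (x y : X) (k : ℕ) : Prop :=
  0 < k ∧ ∃ c : ℕ → X, (∀ i ≤ k, c i ∈ S) ∧ c 0 = x ∧ c k = y ∧
    ∀ i < k, dist (f (c i)) (c (i + 1)) ≤ δ

/-- There is a `δ`-chain from `x` to `y` inside `S`. -/
def ChainInReach (f : X → X) (S : Set X) (δ : ℝ) (x y : X) : Prop :=
  ∃ k, ChainInLen f S δ x y k

/-- `f` restricted to `S` is chain transitive. -/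
def ChainTransitiveOn (f : X → X) (S : Set X) : Prop :=
  ∀ x ∈ S, ∀ y ∈ S, ∀ δ > 0, ChainInReach f S δ x y

/-- The set of lengths of `δ`-cycles of `f` restricted to `C`. -/
def cycLengths (f : X → X) (C : Set X) (δ : ℝ) : Set ℕ :=
  {k | ∃ x ∈ C, ChainInLen f C δ x x k}

/-- The relation `∼_{C,δ}` : there is a `δ`-chain in `C` from `x` to `y` whose
length is divisible by the gcd `m(C,δ)` of all `δ`-cycle lengths (divisibility by
the gcd is expressed via common divisors). -/
def relCdelta (f : X → X) (C : Set X) (δ : ℝ) (x y : X) : Prop :=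
  ∃ k : ℕ, (∀ d : ℕ, (∀ l ∈ cycLengths f C δ, d ∣ l) → d ∣ k) ∧
    ChainInLen f C δ x y k

/-- The chain proximal relation `∼_C`. -/
def relC (f : X → X) (C : Set X) (x y : X) : Prop := ∀ δ > 0, relCdelta f C δ x y

/-- The class of `∼_{C,δ}` containing `x`. -/
def classCdelta (f : X → X) (C : Set X) (δ : ℝ) (x : X) : Set X :=
  {y | y ∈ C ∧ relCdelta f C δ x y}

/-- The class of `∼_C` containing `x`. -/
def classC (f : X → X) (C : Set X) (x : X) : Set X :=
  {y | y ∈ C ∧ relC f C x y}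

/-- The basin of attraction of a set. -/
def basin (f : X → X) (C : Set X) : Set X :=
  {x | Tendsto (fun i => infDist (f^[i] x) C) atTop (𝓝 0)}

/-- `V^s(D)` for the class `D` of `∼_C` containing the point `x ∈ C`. -/
def Vs (f : X → X) (C : Set X) (x : X) : Set X :=
  {z | z ∈ basin f C ∧ ∀ δ > 0,
    Tendsto (fun i => infDist (f^[i] z) (f^[i] '' classCdelta f C δ x)) atTop (𝓝 0)}

/-- `(x i)` is a `δ`-limit-pseudo orbit of `f`. -/
def LimitPseudoOrbit (f : X → X) (δ : ℝ) (x : ℕ → X) : Prop :=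
  (∀ i, dist (f (x i)) (x (i + 1)) ≤ δ) ∧
  Tendsto (fun i => dist (f (x i)) (x (i + 1))) atTop (𝓝 0)

/-- `f` has the s-limit shadowing property. -/
def SLimitShadowing (f : X → X) : Prop :=
  ∀ ε > 0, ∃ δ > 0, ∀ x : ℕ → X, LimitPseudoOrbit f δ x →
    ∃ z : X, (∀ i, dist (f^[i] z) (x i) ≤ ε) ∧
      Tendsto (fun i => dist (f^[i] z) (x i)) atTop (𝓝 0)

/-- `f` has the shadowing property. -/
def Shadowing (f : X → X) : Prop :=
  ∀ ε > 0, ∃ δ > 0, ∀ x : ℕ → X, (∀ i, dist (f (x i)) (x (i + 1)) ≤ δ) →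
    ∃ z : X, ∀ i, dist (f^[i] z) (x i) ≤ ε

section AuxChains

variable {f : X → X} {S : Set X} {δ δ' : ℝ} {a b c u v : X} {k l : ℕ}

lemma ChainInLen.mono (h : ChainInLen f S δ a b k) (hδ : δ ≤ δ') :
    ChainInLen f S δ' a b k := by
  obtain ⟨hk, c, hc, h0, hk', hj⟩ := h
  exact ⟨hk, c, hc, h0, hk', fun i hi => (hj i hi).trans hδ⟩

lemma ChainInLen.comp (h1 : ChainInLen f S δ a b k) (h2 : ChainInLen f S δ b c l) :
    ChainInLen f S δ a c (k + l) := by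
  obtain ⟨hk, p, hp, hp0, hpk, hjp⟩ := h1
  obtain ⟨hl, q, hq, hq0, hql, hjq⟩ := h2
  refine ⟨by omega, fun i => if i < k then p i else q (i - k), ?_, ?_, ?_, ?_⟩
  · intro i hi
    by_cases h : i < k
    · simpa [h] using hp i (by omega)
    · simpa [h] using hq (i - k) (by omega)
  · simp [hk, hp0]
  · have h : ¬ (k + l < k) := by omega
    simpa [h] using hql
  · intro i hi
    by_cases h : i < k
    · by_cases h' : i + 1 < k
      · simpa [h, h'] using hjp i h
      · have hik : i + 1 = k := by omega
        have hj' : dist (f (p i)) (p k) ≤ δ := by rw [← hik]; exact hjp i h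
        have : q (i + 1 - k) = p k := by
          rw [hik]; simp [hq0, hpk]
        simpa [h, h', this, hq0, hpk] using hj' 
    · have h' : ¬ (i + 1 < k) := by omega
      have e1 : i + 1 - k = (i - k) + 1 := by omega
      have := hjq (i - k) (by omega)
      simpa [h, h', e1] using this


lemma chainInLen_orbit (hS : ∀ u ∈ S, f u ∈ S) (hu : u ∈ S) {j : ℕ} (hj : 0 < j)
    (hδ : 0 ≤ δ) : ChainInLen f S δ u (f^[j] u) j := by
  have hmem : ∀ i : ℕ, f^[i] u ∈ S := by
    intro i; induction i with
    | zero => simpa using hu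
    | succ n ih => rw [Function.iterate_succ_apply']; exact hS _ ih
  refine ⟨hj, fun i => f^[i] u, fun i _ => hmem i, rfl, rfl, fun i hi => ?_⟩
  rw [← Function.iterate_succ_apply' f i u]
  simpa using hδ

lemma chainReach_iff : ChainReach f δ a b ↔ ∃ k, ChainInLen f (Set.univ) δ a b k := by
  constructor
  · rintro ⟨k, hk, c, h0, hk', hj⟩
    exact ⟨k, hk, c, fun i _ => trivial, h0, hk', hj⟩
  · rintro ⟨k, hk, c, _, h0, hk', hj⟩
    exact ⟨k, hk, c, h0, hk', hj⟩

lemma ChainReach.mono (h : ChainReach f δ a b) (hδ : δ ≤ δ') : ChainReach f δ' a b := by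
  rw [chainReach_iff] at h ⊢; obtain ⟨k, hk⟩ := h; exact ⟨k, hk.mono hδ⟩

lemma ChainReach.comp (h1 : ChainReach f δ a b) (h2 : ChainReach f δ b c) :
    ChainReach f δ a c := by
  rw [chainReach_iff] at h1 h2 ⊢
  obtain ⟨k, hk⟩ := h1; obtain ⟨l, hl⟩ := h2
  exact ⟨k + l, hk.comp hl⟩

lemma ChainInLen.chainReach (h : ChainInLen f S δ a b k) : ChainReach f δ a b := by
  obtain ⟨hk, c, hc, h0, hk', hj⟩ := h
  exact ⟨k, hk, c, h0, hk', hj⟩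

end AuxChains
set_option linter.unusedSectionVars false
section AuxComp

variable [CompactSpace X] {f : X → X} {C : Set X} {u v xb : X} {δ : ℝ}

lemma ucont (hf : Continuous f) {ε : ℝ} (hε : 0 < ε) :
    ∃ η > 0, ∀ a b : X, dist a b ≤ η → dist (f a) (f b) ≤ ε := by
  have h := Metric.uniformContinuous_iff.mp (CompactSpace.uniformContinuous_of_continuous hf) ε hε
  obtain ⟨δ, hδ, h⟩ := h
  exact ⟨δ/2, by linarith, fun a b hab => le_of_lt (h (lt_of_le_of_lt hab (by linarith)))⟩

lemma chainReach_step (f : X → X) (u : X) (hδ : 0 ≤ δ) : ChainReach f δ u (f u) :=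
  ⟨1, one_pos, fun i => if i = 0 then u else f u, by simp, by simp, by
    intro i hi; interval_cases i; simp [hδ]⟩

lemma reach_shift (hf : Continuous f) (h : ∀ δ > 0, ChainReach f δ u v)
    (hv : ∀ δ > 0, ChainReach f δ v v) : ∀ δ > 0, ChainReach f δ (f u) v := by
  intro δ hδ
  obtain ⟨η, hη, hmod⟩ := ucont hf (half_pos hδ)
  set η' := min η (δ/2) with hη'def
  have hη' : 0 < η' := lt_min hη (half_pos hδ)
  have hη'η : η' ≤ η := min_le_left _ _
  have hη'δ : η' ≤ δ/2 := min_le_right _ _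
  obtain ⟨k, hk⟩ := chainReach_iff.mp (h η' hη')
  obtain ⟨l, hl⟩ := chainReach_iff.mp (hv η' hη')
  have hk1 : 0 < k := hk.1
  have hl1 : 0 < l := hl.1
  obtain ⟨-, c, -, h0, hcm, hj⟩ := hk.comp hl
  refine ⟨k + l - 1, by omega, fun i => if i = 0 then f u else c (i + 1), by simp, ?_, ?_⟩
  · have h' : ¬ (k + l - 1 = 0) := by omega
    have h'' : k + l - 1 + 1 = k + l := by omega
    simp only [h', if_false, h'', hcm]
  · intro i hi
    by_cases h' : i = 0
    · subst h'
      simp only [if_pos rfl, if_neg one_ne_zero]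
      have d1 : dist (f (c 0)) (c 1) ≤ η' := hj 0 (by omega)
      have d2 : dist (f (c 1)) (c 2) ≤ η' := hj 1 (by omega)
      have d3 : dist (f (f u)) (f (c 1)) ≤ δ/2 := by
        rw [← h0]; exact hmod _ _ (by rw [h0] at d1 ⊢; exact d1.trans hη'η)
      calc dist (f (f u)) (c (1+1)) ≤ dist (f (f u)) (f (c 1)) + dist (f (c 1)) (c 2) :=
            dist_triangle _ _ _
        _ ≤ δ/2 + δ/2 := add_le_add d3 (d2.trans hη'δ)
        _ = δ := by ring
    · have h'' : ¬ (i + 1 = 0) := by omega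
      simp only [if_neg h', if_neg h'']
      exact (hj (i + 1) (by omega)).trans (by linarith)

end AuxComp
section AuxComp2
set_option linter.unusedSectionVars false

variable [CompactSpace X] {f : X → X} {C : Set X} {u v xb : X} {δ : ℝ}

lemma comp_mem_iff (hCeq : C = {y | y ∈ CR f ∧ ChainRel f xb y}) :
    u ∈ C ↔ (ChainTo f u u ∧ ChainTo f xb u ∧ ChainTo f u xb) := by
  rw [hCeq]; exact ⟨fun h => ⟨h.1, h.2.1, h.2.2⟩, fun h => ⟨h.1, h.2.1, h.2.2⟩⟩

lemma comp_reach (hCeq : C = {y | y ∈ CR f ∧ ChainRel f xb y})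
    (hu : u ∈ C) (hv : v ∈ C) : ∀ δ > 0, ChainReach f δ u v := by
  intro δ hδ
  exact (((comp_mem_iff hCeq).mp hu).2.2 δ hδ).comp (((comp_mem_iff hCeq).mp hv).2.1 δ hδ)

lemma comp_inv (hf : Continuous f) (hxb : xb ∈ CR f)
    (hCeq : C = {y | y ∈ CR f ∧ ChainRel f xb y}) (hu : u ∈ C) : f u ∈ C := by
  obtain ⟨hcr, hxu, hux⟩ := (comp_mem_iff hCeq).mp hu
  have h1 : ChainTo f xb (f u) := fun δ hδ =>
    (hxu δ hδ).comp (chainReach_step f u hδ.le)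
  have h2 : ChainTo f (f u) xb := reach_shift hf hux hxb
  refine (comp_mem_iff hCeq).mpr ⟨fun δ hδ => ?_, h1, h2⟩
  exact (h2 δ hδ).comp (h1 δ hδ)

lemma comp_iterate (hf : Continuous f) (hxb : xb ∈ CR f)
    (hCeq : C = {y | y ∈ CR f ∧ ChainRel f xb y}) (hu : u ∈ C) (n : ℕ) : f^[n] u ∈ C := by
  induction n with
  | zero => simpa using hu
  | succ m ih => rw [Function.iterate_succ_apply']; exact comp_inv hf hxb hCeq ih

end AuxComp2
section AuxT1
set_option linter.unusedSectionVars false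

variable [CompactSpace X] {f : X → X} {C : Set X} {u v xb a b a' b' : X} {δ r ρ : ℝ}

/-- Points `δ`-chain-equivalent to `xb`. -/
def Rset (f : X → X) (xb : X) (δ : ℝ) : Set X :=
  {p | ChainReach f δ xb p ∧ ChainReach f δ p xb}

lemma Rset_mono {δ δ' : ℝ} (h : δ ≤ δ') : Rset f xb δ ⊆ Rset f xb δ' :=
  fun _ hp => ⟨hp.1.mono h, hp.2.mono h⟩

lemma reach_target_perturb (h : ChainReach f δ a b) (hr : dist b b' ≤ r) :
    ChainReach f (δ + r) a b' := by
  obtain ⟨k, hk, c, h0, hk', hj⟩ := h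
  refine ⟨k, hk, fun i => if i = k then b' else c i, by simp only []; rw [if_neg (by omega : ¬(0 = k)), h0], by simp, ?_⟩
  intro i hi
  have hik : ¬ (i = k) := by omega
  by_cases h' : i + 1 = k
  · simp only [if_neg hik, if_pos h']
    calc dist (f (c i)) b' ≤ dist (f (c i)) (c (i+1)) + dist (c (i+1)) b' := dist_triangle _ _ _
      _ ≤ δ + r := add_le_add (hj i hi) (by rw [h', hk']; exact hr)
  · simp only [if_neg hik, if_neg h']
    have hd : dist b b' ≤ r := hr
    have : (0:ℝ) ≤ r := le_trans dist_nonneg hd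
    linarith [hj i hi]

lemma reach_source_perturb (h : ChainReach f δ a b) (hηr : dist (f a') (f a) ≤ ρ) :
    ChainReach f (δ + ρ) a' b := by
  obtain ⟨k, hk, c, h0, hk', hj⟩ := h
  refine ⟨k, hk, fun i => if i = 0 then a' else c i, by simp, by simp only []; rw [if_neg (by omega : ¬(k = 0)), hk'], ?_⟩
  intro i hi
  have hρ : (0:ℝ) ≤ ρ := le_trans dist_nonneg hηr
  by_cases h' : i = 0
  · subst h'
    have h1 : ¬ ((0:ℕ) + 1 = 0) := by omega
    simp only [if_pos rfl, if_neg h1]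
    calc dist (f a') (c 1) ≤ dist (f a') (f a) + dist (f a) (c 1) := dist_triangle _ _ _
      _ ≤ ρ + δ := add_le_add hηr (by rw [← h0]; exact hj 0 hi)
      _ = δ + ρ := by ring
  · have h1 : ¬ (i + 1 = 0) := by omega
    simp only [if_neg h', if_neg h1]
    linarith [hj i hi]

lemma closure_Rset_subset (hf : Continuous f) {δ₂ : ℝ} (hδ₂ : 0 < δ₂) :
    ∃ δ > 0, closure (Rset f xb δ) ⊆ Rset f xb δ₂ := by
  obtain ⟨η, hη, hmod⟩ := ucont hf (half_pos hδ₂)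
  refine ⟨δ₂/2, half_pos hδ₂, fun p hp => ?_⟩
  obtain ⟨q, hq, hpq⟩ := Metric.mem_closure_iff.mp hp (min η (δ₂/2)) (lt_min hη (half_pos hδ₂))
  constructor
  · have := reach_target_perturb hq.1 (r := δ₂/2)
      (by rw [dist_comm]; exact le_trans hpq.le (min_le_right _ _))
    simpa using this.mono (by linarith)
  · have hfd : dist (f p) (f q) ≤ δ₂/2 := hmod _ _ (le_trans hpq.le (min_le_left _ _))
    have := reach_source_perturb hq.2 (ρ := δ₂/2) hfd
    simpa using this.mono (by linarith)

lemma Rset_small (hf : Continuous f) (hxb : xb ∈ CR f)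
    (hCeq : C = {y | y ∈ CR f ∧ ChainRel f xb y}) (hρ : 0 < ρ) :
    ∃ δ₅ > 0, Rset f xb δ₅ ⊆ {p | infDist p C < ρ} := by
  by_contra hcon
  push_neg at hcon
  have hch : ∀ n : ℕ, ∃ p, p ∈ Rset f xb (1/(n+1)) ∧ ρ ≤ infDist p C := by
    intro n
    have h := hcon (1/(n+1)) (by positivity)
    rw [Set.not_subset] at h
    obtain ⟨p, hp1, hp2⟩ := h
    exact ⟨p, hp1, not_lt.mp hp2⟩
  choose p hp hdist using hch
  obtain ⟨q, -, φ, hφ, hlim⟩ := isCompact_univ.tendsto_subseq (x := p) (fun n => trivial)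
  have hqR : ∀ δ₂ > 0, q ∈ Rset f xb δ₂ := by
    intro δ₂ hδ₂
    obtain ⟨δ, hδ, hsub⟩ := closure_Rset_subset hf hδ₂ (xb := xb)
    apply hsub
    apply mem_closure_of_tendsto hlim
    obtain ⟨n, hn⟩ := exists_nat_one_div_lt hδ
    filter_upwards [eventually_ge_atTop n] with m hm
    refine Rset_mono ?_ (hp (φ m))
    have hmφ : m ≤ φ m := hφ.le_apply
    have h1 : (n:ℝ) + 1 ≤ (φ m : ℝ) + 1 := by
      have h2 : (m:ℝ) ≤ φ m := by exact_mod_cast hmφ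
      have hnm : (n:ℝ) ≤ m := by exact_mod_cast hm
      linarith
    calc 1/((φ m:ℝ)+1) ≤ 1/((n:ℝ)+1) := one_div_le_one_div_of_le (by positivity) h1
      _ ≤ δ := hn.le
  have hqC : q ∈ C := by
    rw [hCeq]
    refine ⟨fun δ hδ => ((hqR δ hδ).2).comp ((hqR δ hδ).1), fun δ hδ => (hqR δ hδ).1,
      fun δ hδ => (hqR δ hδ).2⟩
  have h0 : infDist q C = 0 := infDist_zero_of_mem hqC
  have hge : ρ ≤ infDist q C := by
    have hcont : Tendsto (fun n => infDist (p (φ n)) C) atTop (𝓝 (infDist q C)) :=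
      ((continuous_infDist_pt C).continuousAt.tendsto.comp hlim)
    exact ge_of_tendsto hcont (Eventually.of_forall fun n => hdist (φ n))
  linarith

end AuxT1
section AuxT1b
set_option linter.unusedSectionVars false
set_option linter.unusedVariables false

variable [CompactSpace X] {f : X → X} {C : Set X} {u v xb : X}

lemma comp_chainInReach (hf : Continuous f) (hxb : xb ∈ CR f)
    (hCeq : C = {y | y ∈ CR f ∧ ChainRel f xb y}) (hu : u ∈ C) (hv : v ∈ C)
    {δ : ℝ} (hδ : 0 < δ) : ∃ m, ChainInLen f C δ u v m := by
  obtain ⟨η, hη, hmod⟩ := ucont hf (by positivity : (0:ℝ) < δ/3)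
  set δ₄ := min η (δ/3) with hδ₄def
  have hδ₄ : 0 < δ₄ := lt_min hη (by positivity)
  obtain ⟨δ₅, hδ₅, hsub⟩ := Rset_small hf hxb hCeq hδ₄
  set δ' := min δ₅ (δ/3) with hδ'def
  have hδ' : 0 < δ' := lt_min hδ₅ (by positivity)
  obtain ⟨k, hk⟩ := chainReach_iff.mp (((comp_mem_iff hCeq).mp hu).2.2 δ' hδ')
  obtain ⟨l, hl⟩ := chainReach_iff.mp (((comp_mem_iff hCeq).mp hv).2.1 δ' hδ')
  have hk1 := hk.1
  have hl1 := hl.1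
  obtain ⟨-, c, -, h0, hcm, hj⟩ := hk.comp hl
  set m := k + l with hmdef
  have hm2 : 2 ≤ m := by omega
  have hpts : ∀ i, i ≤ m → c i ∈ Rset f xb δ' := by
    intro i hi
    constructor
    · by_cases h' : i = 0
      · subst h'; rw [h0]; exact ((comp_mem_iff hCeq).mp hu).2.1 δ' hδ'
      · exact (((comp_mem_iff hCeq).mp hu).2.1 δ' hδ').comp
          ⟨i, by omega, c, h0, rfl, fun j hj' => hj j (by omega)⟩
    · by_cases h' : i = m
      · subst h'; rw [hcm]; exact ((comp_mem_iff hCeq).mp hv).2.2 δ' hδ'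
      · refine (ChainReach.comp (b := v) ⟨m - i, by omega, fun j => c (i + j), by simp, ?_, ?_⟩
          (((comp_mem_iff hCeq).mp hv).2.2 δ' hδ'))
        · show c (i + (m - i)) = v
          rw [show i + (m - i) = m by omega, hcm]
        · intro j hj'
          exact hj (i + j) (by omega)
  have hproj : ∀ i : ℕ, ∃ q, q ∈ C ∧ dist (c (min i m)) q ≤ δ₄ := by
    intro i
    have h1 : c (min i m) ∈ Rset f xb δ₅ := Rset_mono (min_le_left _ _) (hpts _ (min_le_right _ _))
    have h2 : infDist (c (min i m)) C < δ₄ := hsub h1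
    obtain ⟨q, hq, hdq⟩ := (Metric.infDist_lt_iff (hs := ⟨u, hu⟩)).mp h2
    exact ⟨q, hq, hdq.le⟩
  choose q hqC hqd using hproj
  set q' : ℕ → X := fun i => if i = 0 then u else if i = m then v else q i with hq'def
  have hd : ∀ i, i ≤ m → dist (q' i) (c i) ≤ δ₄ := by
    intro i hi
    by_cases h0' : i = 0
    · subst h0'; simp [hq'def, h0, hδ₄.le]
    · by_cases hm' : i = m
      · subst hm'; simp [hq'def, hcm, if_neg h0', hδ₄.le]
      · have := hqd i
        rw [min_eq_left hi] at this
        simp only [hq'def, if_neg h0', if_neg hm']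
        rw [dist_comm]; exact this
  refine ⟨m, by omega, q', ?_, ?_, ?_, ?_⟩
  · intro i hi
    by_cases h0' : i = 0
    · subst h0'; simpa [hq'def] using hu
    · by_cases hm' : i = m
      · subst hm'; simpa [hq'def, if_neg h0'] using hv
      · simpa [hq'def, if_neg h0', if_neg hm'] using hqC i
  · simp [hq'def]
  · show q' m = v
    simp only [hq'def]
    rw [if_neg (by omega : ¬ (m = 0))]; simp
  · intro i hi
    have t1 : dist (f (q' i)) (f (c i)) ≤ δ/3 :=
      hmod _ _ ((hd i (by omega)).trans (min_le_left _ _))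
    have t2 : dist (f (c i)) (c (i+1)) ≤ δ/3 := (hj i hi).trans (min_le_right _ _)
    have t3 : dist (c (i+1)) (q' (i+1)) ≤ δ/3 := by
      rw [dist_comm]; exact (hd (i+1) (by omega)).trans (min_le_right _ _)
    calc dist (f (q' i)) (q' (i+1)) ≤ dist (f (q' i)) (f (c i)) + dist (f (c i)) (c (i+1))
          + dist (c (i+1)) (q' (i+1)) := dist_triangle4 _ _ _ _
      _ ≤ δ/3 + δ/3 + δ/3 := by gcongr
      _ = δ := by ring

end AuxT1b
section AuxNum

lemma semigroup_gcd (S : Set ℕ) (hne : S.Nonempty) (hpos : ∀ s ∈ S, 0 < s)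
    (hadd : ∀ a ∈ S, ∀ b ∈ S, a + b ∈ S) :
    ∃ g, 0 < g ∧ (∀ s ∈ S, g ∣ s) ∧ ∃ N, 0 < N ∧ ∀ t, N ≤ t → g * t ∈ S := by
  classical
  set M := AddSubmonoid.closure S with hM
  have hSM : ∀ s ∈ S, s ∈ M := fun s hs => AddSubmonoid.subset_closure hs
  have hMS : ∀ n ∈ M, 0 < n → n ∈ S := by
    have key : ∀ n ∈ M, n = 0 ∨ n ∈ S := by
      intro n hn
      induction hn using AddSubmonoid.closure_induction with
      | mem x hx => exact Or.inr hx
      | zero => exact Or.inl rfl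
      | add a b ha hb iha ihb =>
        rcases iha with ha0 | haS
        · rcases ihb with hb0 | hbS
          · exact Or.inl (by omega)
          · exact Or.inr (by simpa [ha0] using hbS)
        · rcases ihb with hb0 | hbS
          · exact Or.inr (by simpa [hb0] using haS)
          · exact Or.inr (hadd _ haS _ hbS)
    intro n hn hn0
    rcases key n hn with h | h
    · omega
    · exact h
  set P : Set ℕ := {n | 0 < n ∧ ∃ A ∈ M, ∃ B ∈ M, (A:ℤ) = (B:ℤ) + n} with hP
  have hPne : P.Nonempty := by
    obtain ⟨s, hs⟩ := hne
    exact ⟨s, hpos s hs, s, hSM s hs, 0, zero_mem M, by push_cast; ring⟩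
  set g := sInf P with hg
  have hgP : g ∈ P := Nat.sInf_mem hPne
  obtain ⟨hg0, Ag, hAg, Bg, hBg, hABg⟩ := hgP
  have hdvd : ∀ A ∈ M, ∀ B ∈ M, (g:ℤ) ∣ ((A:ℤ) - B) := by
    intro A hA B hB
    set n : ℤ := (A:ℤ) - B with hn
    set q : ℤ := n / g with hq
    set r : ℤ := n % g with hr
    have hgz : (g:ℤ) ≠ 0 := by exact_mod_cast hg0.ne'
    have hr0 : 0 ≤ r := Int.emod_nonneg n hgz
    have hrg : r < g := Int.emod_lt_of_pos n (by exact_mod_cast hg0)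
    have hnr : (g:ℤ) * q + r = n := Int.mul_ediv_add_emod n g
    have hrep : ∃ A' ∈ M, ∃ B' ∈ M, (A':ℤ) = (B':ℤ) + r := by
      rcases le_or_gt 0 q with hq0 | hq0
      · refine ⟨A + q.toNat * Bg, add_mem hA (by simpa [smul_eq_mul] using nsmul_mem hBg q.toNat),
          B + q.toNat * Ag, add_mem hB (by simpa [smul_eq_mul] using nsmul_mem hAg q.toNat), ?_⟩
        have hqt : ((q.toNat : ℤ)) = q := Int.toNat_of_nonneg hq0
        push_cast
        rw [hqt]
        linear_combination (-q) * hABg - hnr - hn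
      · refine ⟨A + (-q).toNat * Ag, add_mem hA (by simpa [smul_eq_mul] using nsmul_mem hAg (-q).toNat),
          B + (-q).toNat * Bg, add_mem hB (by simpa [smul_eq_mul] using nsmul_mem hBg (-q).toNat), ?_⟩
        have hqt : (((-q).toNat : ℤ)) = -q := Int.toNat_of_nonneg (by omega)
        push_cast
        rw [hqt]
        linear_combination (-q) * hABg - hnr - hn
    have hrzero : r = 0 := by
      by_contra hrne
      have hr1 : 0 < r.toNat := by omega
      have hrP : r.toNat ∈ P := by
        obtain ⟨A', hA', B', hB', hAB'⟩ := hrep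
        refine ⟨hr1, A', hA', B', hB', ?_⟩
        rw [hAB']
        congr 1
        omega
      have := Nat.sInf_le hrP
      omega
    refine ⟨q, by linarith⟩
  have castdvd : ∀ m : ℕ, m ∈ M → g ∣ m := by
    intro m hm
    have := hdvd m hm 0 (zero_mem M)
    have h2 : (g:ℤ) ∣ (m:ℤ) := by simpa using this
    exact_mod_cast h2
  have hdvdS : ∀ s ∈ S, g ∣ s := fun s hs => castdvd s (hSM s hs)
  refine ⟨g, hg0, hdvdS, ?_⟩
  obtain ⟨a, ha⟩ := castdvd Ag hAg
  obtain ⟨b, hb⟩ := castdvd Bg hBg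
  have hab : a = b + 1 := by
    have h := hABg
    rw [ha, hb] at h
    push_cast at h
    have hgz : (0:ℤ) < g := by exact_mod_cast hg0
    have h2 : (a:ℤ) = b + 1 :=
      mul_left_cancel₀ (ne_of_gt hgz) (by linarith : (g:ℤ) * a = g * ((b:ℤ) + 1))
    exact_mod_cast h2
  rcases Nat.eq_zero_or_pos b with hb0 | hb1
  · have hgAg : Ag = g := by
      rw [ha, hab, hb0]; ring
    have hgS : g ∈ S := hMS g (hgAg ▸ hAg) hg0
    refine ⟨1, one_pos, fun t ht => ?_⟩
    induction t with
    | zero => omega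
    | succ m ih =>
      rcases Nat.eq_zero_or_pos m with hm0 | hm1
      · simpa [hm0] using hgS
      · have h2 : g * (m + 1) = g * m + g := by ring
        rw [h2]
        exact hadd _ (ih (by omega)) _ hgS
  · refine ⟨b * b + b + 1, by positivity, fun t ht => ?_⟩
    set x := t % b with hx
    set q' := t / b with hq'
    have h1 : b * q' + x = t := Nat.div_add_mod t b
    have hxb : x < b := Nat.mod_lt _ hb1
    have hqx : x < q' := by nlinarith
    set y := q' - x with hy
    have hyx : y + x = q' := by omega
    have key : g * t = x * Ag + y * Bg := by
      rw [ha, hb, hab, ← h1, ← hyx]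
      ring
    have hmem : x * Ag + y * Bg ∈ M :=
      add_mem (by simpa [smul_eq_mul] using nsmul_mem hAg x)
        (by simpa [smul_eq_mul] using nsmul_mem hBg y)
    exact hMS _ (by rw [key]; exact hmem) (Nat.mul_pos hg0 (by omega))

end AuxNum
section AuxU
set_option linter.unusedSectionVars false
set_option linter.unusedVariables false

variable [CompactSpace X] {f : X → X} {C : Set X} {u v xb : X}

lemma uniform_bound (hf : Continuous f) (hxb : xb ∈ CR f)
    (hCeq : C = {y | y ∈ CR f ∧ ChainRel f xb y}) {δ' : ℝ} (hδ' : 0 < δ') :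
    ∃ B : ℕ, 0 < B ∧ ∀ u v, u ∈ C → v ∈ C → ∃ L, L ≤ B ∧ ChainInLen f C δ' u v L := by
  classical
  obtain ⟨η, hη, hmod⟩ := ucont hf (by positivity : (0:ℝ) < δ'/4)
  set η' := min η (δ'/4) with hη'def
  have hη'0 : 0 < η' := lt_min hη (by positivity)
  have htb : TotallyBounded C := (isCompact_univ.totallyBounded).subset (subset_univ C)
  obtain ⟨t, htC, htfin, hcov⟩ := totallyBounded_iff_subset.mp htb
    {p : X × X | dist p.1 p.2 < η'} (dist_mem_uniformity hη'0)
  -- length function between points of C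
  have hLen : ∀ a b : X, ∃ L : ℕ, (a ∈ C → b ∈ C → ChainInLen f C (δ'/4) a b L) := by
    intro a b
    by_cases h : a ∈ C ∧ b ∈ C
    · obtain ⟨L, hL⟩ := comp_chainInReach hf hxb hCeq h.1 h.2 (by positivity : (0:ℝ) < δ'/4)
      exact ⟨L, fun _ _ => hL⟩
    · exact ⟨1, fun ha hb => absurd ⟨ha, hb⟩ h⟩
  choose Len hLenSpec using hLen
  set ft := htfin.toFinset with hft
  set B := (ft.sup fun a => ft.sup fun b => Len a b) + 1 with hB
  refine ⟨B, by positivity, ?_⟩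
  intro u v hu hv
  obtain ⟨ci, hci, hdui⟩ := by
    have := hcov hu
    simpa using this
  obtain ⟨cj, hcj, hdvj⟩ := by
    have := hcov hv
    simpa using this
  have hciC : ci ∈ C := htC hci
  have hcjC : cj ∈ C := htC hcj
  obtain ⟨hL0, p, hpC, hp0, hpL, hpj⟩ := hLenSpec ci cj hciC hcjC
  set L := Len ci cj with hLdef
  have hLB : L ≤ B := by
    have h1 : L ≤ ft.sup fun b => Len ci b :=
      Finset.le_sup (f := fun b => Len ci b) (htfin.mem_toFinset.mpr hcj)
    have h2 : (ft.sup fun b => Len ci b) ≤ ft.sup fun a => ft.sup fun b => Len a b :=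
      Finset.le_sup (f := fun a => ft.sup fun b => Len a b) (htfin.mem_toFinset.mpr hci)
    omega
  set q' : ℕ → X := fun s => if s = 0 then u else if s = L then v else p s with hq'
  have hdq : ∀ s, s ≤ L → dist (q' s) (p s) ≤ η' := by
    intro s hs
    by_cases h0 : s = 0
    · subst h0
      have h := hdui.le
      simp only [hq', if_pos rfl, hp0]
      first
        | exact h
        | (rw [dist_comm]; exact h)
    · by_cases hLs : s = L
      · subst hLs
        have h := hdvj.le
        simp only [hq', if_neg h0, if_pos rfl, hpL]
        first
          | exact h
          | (rw [dist_comm]; exact h)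
      · simp only [hq', if_neg h0, if_neg hLs]
        simp [hη'0.le]
  refine ⟨L, hLB, hL0, q', ?_, by simp [hq'], ?_, ?_⟩
  · intro s hs
    by_cases h0 : s = 0
    · subst h0; simpa [hq'] using hu
    · by_cases hLs : s = L
      · subst hLs; simpa [hq', if_neg h0] using hv
      · simpa [hq', if_neg h0, if_neg hLs] using hpC s hs
  · show q' L = v
    simp only [hq']
    rcases Nat.eq_zero_or_pos L with h | h
    · omega
    · rw [if_neg (by omega : ¬ (L = 0))]; simp
  · intro s hs
    have t1 : dist (f (q' s)) (f (p s)) ≤ δ'/4 :=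
      hmod _ _ ((hdq s (by omega)).trans (min_le_left _ _))
    have t2 : dist (f (p s)) (p (s+1)) ≤ δ'/4 := hpj s hs
    have t3 : dist (p (s+1)) (q' (s+1)) ≤ δ'/4 := by
      rw [dist_comm]; exact (hdq (s+1) (by omega)).trans (min_le_right _ _)
    calc dist (f (q' s)) (q' (s+1)) ≤ dist (f (q' s)) (f (p s)) + dist (f (p s)) (p (s+1))
          + dist (p (s+1)) (q' (s+1)) := dist_triangle4 _ _ _ _
      _ ≤ δ'/4 + δ'/4 + δ'/4 := by gcongr
      _ ≤ δ' := by linarith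

end AuxU
section AuxExact
set_option linter.unusedSectionVars false
set_option linter.unusedVariables false

variable [CompactSpace X] {f : X → X} {C : Set X} {xb : X}

lemma exact_chain (hf : Continuous f) (hxb : xb ∈ CR f)
    (hCeq : C = {y | y ∈ CR f ∧ ChainRel f xb y}) {x₀ : X} (hx₀ : x₀ ∈ C)
    {δ' : ℝ} (hδ' : 0 < δ') :
    ∃ k : ℕ, 0 < k ∧ ∀ n : ℕ, 1 ≤ n → ∀ d e : X,
      d ∈ classCdelta f C δ' x₀ → e ∈ classCdelta f C δ' x₀ →
      ChainInLen f C δ' (f^[n] d) (f^[n + k] e) k := by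
  classical
  set S₀ : Set ℕ := {m | ChainInLen f C δ' x₀ x₀ m} with hS₀
  have hS₀ne : S₀.Nonempty := by
    obtain ⟨m, hm⟩ := comp_chainInReach hf hxb hCeq hx₀ hx₀ hδ'
    exact ⟨m, hm⟩
  have hS₀pos : ∀ s ∈ S₀, 0 < s := fun s hs => hs.1
  have hS₀add : ∀ a ∈ S₀, ∀ b ∈ S₀, a + b ∈ S₀ := fun a ha b hb => ha.comp hb
  obtain ⟨g, hg0, hgdvd, N₀, hN₀, hNmul⟩ := semigroup_gcd S₀ hS₀ne hS₀pos hS₀add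
  have hgcyc : ∀ l ∈ cycLengths f C δ', g ∣ l := by
    rintro l ⟨u, huC, hcyc⟩
    obtain ⟨σ, hσ⟩ := comp_chainInReach hf hxb hCeq hx₀ huC hδ'
    obtain ⟨τ, hτ⟩ := comp_chainInReach hf hxb hCeq huC hx₀ hδ'
    have h1 : g ∣ σ + τ := hgdvd _ (hσ.comp hτ)
    have h2 : g ∣ σ + l + τ := hgdvd _ ((hσ.comp hcyc).comp hτ)
    have h3 : (σ + l + τ) - (σ + τ) = l := by omega
    exact h3 ▸ Nat.dvd_sub h2 h1
  obtain ⟨B, hB0, hBspec⟩ := uniform_bound hf hxb hCeq hδ'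
  have hCinv : ∀ u ∈ C, f u ∈ C := fun u hu => comp_inv hf hxb hCeq hu
  refine ⟨g * (N₀ + 2*B + 1), Nat.mul_pos hg0 (by omega), ?_⟩
  intro n hn d e hd he
  set k := g * (N₀ + 2*B + 1) with hk
  obtain ⟨hdC, k₁, hCD₁, hchain₁⟩ := hd
  obtain ⟨heC, k₂, hCD₂, hchain₂⟩ := he
  have hgk₁ : g ∣ k₁ := hCD₁ g hgcyc
  have hgk₂ : g ∣ k₂ := hCD₂ g hgcyc
  set a := f^[n] d with hadef
  set b := f^[n + k] e with hbdef
  have haC : a ∈ C := comp_iterate hf hxb hCeq hdC n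
  have hbC : b ∈ C := comp_iterate hf hxb hCeq heC (n + k)
  obtain ⟨α, hαB, hchainα⟩ := hBspec a x₀ haC hx₀
  obtain ⟨β, hβB, hchainβ⟩ := hBspec x₀ b hx₀ hbC
  obtain ⟨β', hβ'B, hchainβ'⟩ := hBspec b x₀ hbC hx₀
  have horb₁ : ChainInLen f C δ' d a n := chainInLen_orbit hCinv hdC hn hδ'.le
  have horb₂ : ChainInLen f C δ' e b (n + k) :=
    chainInLen_orbit hCinv heC (by omega) hδ'.le
  have hA1 : g ∣ k₁ + n + α := hgdvd _ ((hchain₁.comp horb₁).comp hchainα)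
  have hA2 : g ∣ k₂ + (n + k) + β' := hgdvd _ ((hchain₂.comp horb₂).comp hchainβ')
  have hA3 : g ∣ β + β' := hgdvd _ (hchainβ.comp hchainβ')
  have hgk : g ∣ k := Dvd.intro _ rfl
  have hgαβ : g ∣ α + β := by
    have hz : ((α:ℤ) + β) = ((k₁ + n + α : ℕ) : ℤ) + ((β + β' : ℕ) : ℤ) + k₂ + k
        - ((k₂ + (n + k) + β' : ℕ) : ℤ) - k₁ := by push_cast; ring
    have hzz : (g:ℤ) ∣ ((α:ℤ) + β) := by
      rw [hz]
      have d1 : (g:ℤ) ∣ ((k₁ + n + α : ℕ) : ℤ) := Int.natCast_dvd_natCast.mpr hA1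
      have d2 : (g:ℤ) ∣ ((k₂ + (n + k) + β' : ℕ) : ℤ) := Int.natCast_dvd_natCast.mpr hA2
      have d3 : (g:ℤ) ∣ ((β + β' : ℕ) : ℤ) := Int.natCast_dvd_natCast.mpr hA3
      have d4 : (g:ℤ) ∣ (k₂:ℤ) := Int.natCast_dvd_natCast.mpr hgk₂
      have d5 : (g:ℤ) ∣ (k₁:ℤ) := Int.natCast_dvd_natCast.mpr hgk₁
      have d6 : (g:ℤ) ∣ (k:ℤ) := Int.natCast_dvd_natCast.mpr hgk
      exact ((((d1.add d3).add d4).add d6).sub d2).sub d5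
    exact_mod_cast hzz
  obtain ⟨s, hs⟩ := hgαβ
  have hsle : s ≤ 2*B := by
    have h1 : s ≤ g * s := Nat.le_mul_of_pos_left s hg0
    have h2 : g * s = α + β := hs.symm
    linarith
  set t := N₀ + 2*B + 1 - s with ht
  have hts : s + t = N₀ + 2*B + 1 := by omega
  have htN : N₀ ≤ t := by omega
  have hcyc0 : ChainInLen f C δ' x₀ x₀ (g * t) := hNmul t htN
  have hfinal := (hchainα.comp hcyc0).comp hchainβ
  have hlen : α + g * t + β = k := by
    have h2 : g * s + g * t = k := by rw [hk, ← Nat.mul_add, hts]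
    calc α + g*t + β = (α + β) + g*t := by ring
      _ = g*s + g*t := by rw [hs]
      _ = k := h2
  rw [hlen] at hfinal
  exact hfinal

end AuxExact
/-- Under s-limit shadowing, for any `x, y ∈ V^s(D)` and `ε > 0` there is
`z ∈ V^s(D)` with `d(y,z) ≤ ε` whose orbit is asymptotic to that of `x`. -/
theorem stmt17 {X : Type*} [MetricSpace X] [CompactSpace X]
    (f : X → X) (hf : Continuous f) (hs : SLimitShadowing f)
    (C : Set X) (hC : IsChainComponent f C) (x₀ : X) (hx₀ : x₀ ∈ C)
    (x y : X) (hx : x ∈ Vs f C x₀) (hy : y ∈ Vs f C x₀) (ε : ℝ) (hε : 0 < ε) :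
    ∃ z ∈ Vs f C x₀, dist y z ≤ ε ∧
      Tendsto (fun i => dist (f^[i] x) (f^[i] z)) atTop (𝓝 0) := by
  classical
  obtain ⟨xb, hxb, hCeq⟩ := hC
  obtain ⟨δ₀, hδ₀, hshad⟩ := hs ε hε
  have hδ' : (0:ℝ) < δ₀/2 := half_pos hδ₀
  obtain ⟨k, hk0, hkspec⟩ := exact_chain hf hxb hCeq hx₀ hδ'
  have hx₀cls : x₀ ∈ classCdelta f C (δ₀/2) x₀ := by
    obtain ⟨m, hm⟩ := comp_chainInReach hf hxb hCeq hx₀ hx₀ hδ'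
    exact ⟨hx₀, m, fun d hd => hd m ⟨x₀, hx₀, hm⟩, hm⟩
  have hxmem : x ∈ basin f C ∧ ∀ δ > 0,
      Tendsto (fun i => infDist (f^[i] x) (f^[i] '' classCdelta f C δ x₀)) atTop (𝓝 0) := hx
  have hymem : y ∈ basin f C ∧ ∀ δ > 0,
      Tendsto (fun i => infDist (f^[i] y) (f^[i] '' classCdelta f C δ x₀)) atTop (𝓝 0) := hy
  have hex : ∀ᶠ i in atTop,
      infDist (f^[i] x) (f^[i] '' classCdelta f C (δ₀/2) x₀) < δ₀/2 :=
    (hxmem.2 (δ₀/2) hδ').eventually (gt_mem_nhds hδ')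
  have hey : ∀ᶠ i in atTop,
      infDist (f^[i] y) (f^[i] '' classCdelta f C (δ₀/2) x₀) < δ₀/2 :=
    (hymem.2 (δ₀/2) hδ').eventually (gt_mem_nhds hδ')
  obtain ⟨Nx, hNx⟩ := eventually_atTop.mp hex
  obtain ⟨Ny, hNy⟩ := eventually_atTop.mp hey
  set n := Nx + Ny + 1 with hn
  have hn1 : 1 ≤ n := by omega
  -- witness d for y at time n
  have himgne : ∀ j : ℕ, (f^[j] '' classCdelta f C (δ₀/2) x₀).Nonempty :=
    fun j => ⟨f^[j] x₀, Set.mem_image_of_mem _ hx₀cls⟩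
  obtain ⟨wd, hwd, hwdd⟩ := (Metric.infDist_lt_iff (hs := himgne n)).mp (hNy n (by omega))
  obtain ⟨d, hdcls, hdeq⟩ := hwd
  obtain ⟨we, hwe, hwee⟩ :=
    (Metric.infDist_lt_iff (hs := himgne (n + k))).mp (hNx (n + k) (by omega))
  obtain ⟨e, hecls, heeq⟩ := hwe
  have hdy : dist (f^[n] y) (f^[n] d) < δ₀/2 := by rw [hdeq]; exact hwdd
  have hdx : dist (f^[n+k] x) (f^[n+k] e) < δ₀/2 := by rw [heeq]; exact hwee
  obtain ⟨-, w, hwC, hw0, hwk, hwj⟩ := hkspec n hn1 d e hdcls hecls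
  -- the pseudo-orbit
  set p : ℕ → X := fun i => if i < n then f^[i] y else if i < n + k then w (i - n) else f^[i] x
    with hp
  have hp0 : p 0 = y := by simp [hp, (by omega : 0 < n)]
  have hpn : p n = f^[n] d := by
    simp only [hp, lt_irrefl, if_false, if_pos (by omega : n < n + k)]
    simpa using hw0
  have hptail : ∀ i, n + k ≤ i → p i = f^[i] x := by
    intro i hi
    simp only [hp, if_neg (by omega : ¬ i < n), if_neg (by omega : ¬ i < n + k)]
  have hjump : ∀ i, dist (f (p i)) (p (i + 1)) ≤ δ₀ := by
    intro i
    rcases lt_or_ge (i+1) n with h1 | h1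
    · -- both y-orbit
      simp only [hp, if_pos (by omega : i < n), if_pos h1]
      rw [← Function.iterate_succ_apply' f i y]
      simp [hδ₀.le]
    rcases eq_or_lt_of_le h1 with h2 | h2
    · -- i + 1 = n
      have hpi1 : p (i + 1) = f^[n] d := by rw [← h2]; exact hpn
      have hpi : p i = f^[i] y := by simp only [hp, if_pos (by omega : i < n)]
      have hfy : f (f^[i] y) = f^[n] y := by rw [h2, Function.iterate_succ_apply']
      rw [hpi, hpi1, hfy]
      exact hdy.le.trans (by linarith)
    rcases lt_or_ge (i+1) (n+k) with h3 | h3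
    · -- chain segment
      have hin : n ≤ i := by omega
      simp only [hp, if_neg (by omega : ¬ i < n), if_pos (by omega : i < n + k),
        if_neg (by omega : ¬ i + 1 < n), if_pos h3]
      have := hwj (i - n) (by omega)
      have he1 : i + 1 - n = (i - n) + 1 := by omega
      rw [he1]
      exact this.trans (by linarith)
    rcases eq_or_lt_of_le h3 with h4 | h4
    · -- i + 1 = n + k
      have hin : n ≤ i := by omega
      simp only [hp, if_neg (by omega : ¬ i < n), if_pos (by omega : i < n + k),
        if_neg (by omega : ¬ i + 1 < n), if_neg (by omega : ¬ i + 1 < n + k)]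
      have hiw : i - n + 1 = k := by omega
      have hjump1 : dist (f (w (i - n))) (w k) ≤ δ₀/2 := by
        rw [← hiw]; exact hwj (i - n) (by omega)
      have h5 : p (i+1) = f^[i+1] x := hptail (i+1) (by omega)
      calc dist (f (w (i - n))) (f^[i+1] x)
          ≤ dist (f (w (i - n))) (w k) + dist (w k) (f^[i+1] x) := dist_triangle _ _ _
        _ ≤ δ₀/2 + δ₀/2 := by
            refine add_le_add hjump1 ?_
            rw [hwk]
            have hi1 : i + 1 = n + k := h4.symm
            rw [hi1, dist_comm]
            exact hdx.le
        _ = δ₀ := by ring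
    · -- tail
      simp only [hp, if_neg (by omega : ¬ i < n), if_neg (by omega : ¬ i < n + k),
        if_neg (by omega : ¬ i + 1 < n), if_neg (by omega : ¬ i + 1 < n + k)]
      rw [← Function.iterate_succ_apply' f i x]
      simp [hδ₀.le]
  have hlim : Tendsto (fun i => dist (f (p i)) (p (i + 1))) atTop (𝓝 0) := by
    have hev : (fun i => dist (f (p i)) (p (i+1))) =ᶠ[atTop] fun _ => (0:ℝ) := by
      filter_upwards [eventually_ge_atTop (n + k)] with i hi
      rw [hptail i hi, hptail (i+1) (by omega), ← Function.iterate_succ_apply' f i x, dist_self]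
    exact Tendsto.congr' hev.symm tendsto_const_nhds
  obtain ⟨z, hz1, hz2⟩ := hshad p ⟨hjump, hlim⟩
  have hzy : dist y z ≤ ε := by
    have h := hz1 0
    rw [hp0] at h
    simpa [dist_comm] using h
  have hzx : Tendsto (fun i => dist (f^[i] z) (f^[i] x)) atTop (𝓝 0) := by
    apply hz2.congr'
    filter_upwards [eventually_ge_atTop (n+k)] with i hi
    rw [hptail i hi]
  have hxz : Tendsto (fun i => dist (f^[i] x) (f^[i] z)) atTop (𝓝 0) := by
    have : (fun i => dist (f^[i] x) (f^[i] z)) = fun i => dist (f^[i] z) (f^[i] x) := by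
      funext i; exact dist_comm _ _
    rw [this]; exact hzx
  refine ⟨z, ⟨?_, ?_⟩, hzy, hxz⟩
  · show Tendsto (fun i => infDist (f^[i] z) C) atTop (𝓝 0)
    have hb : Tendsto (fun i => infDist (f^[i] x) C) atTop (𝓝 0) := hxmem.1
    refine squeeze_zero (fun i => infDist_nonneg) (fun i => ?_) (by simpa using hb.add hzx)
    exact Metric.infDist_le_infDist_add_dist
  · intro δ hδ
    have hb := hxmem.2 δ hδ
    refine squeeze_zero (fun i => infDist_nonneg) (fun i => ?_) (by simpa using hb.add hzx)
    exact Metric.infDist_le_infDist_add_dist
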